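/- Let (g,J) be a real nilpotent Lie algebra with integrable complex structure. If the commutator subalgebra [g,g] contains no nonzero J-invariant subspace, then the complex structure J is abelian, i.e. [x,y] = [Jx,Jy] for all x,y ∈ g. -/

import Mathlib

/-- If the commutator subalgebra of a nilpotent Lie algebra with integrable complex
structure `J` contains no nonzero `J`-invariant subspace, then `J` is abelian. -/
theorem stmt_6 (g : Type*) [LieRing g] [LieAlgebra ℝ g] [LieRing.IsNilpotent g]
    [Module.Finite ℝ g]
    (J : g →ₗ[ℝ] g) (hJ : J ∘ₗ J = -LinearMap.id)
    (hint : ∀ x y : g, ⁅x, y⁆ - ⁅J x, J y⁆ + J ⁅J x, y⁆ + J ⁅x, J y⁆ = 0)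
    (h : ∀ W : Submodule ℝ g, W ≤ (LieAlgebra.derivedSeries ℝ g 1 : Submodule ℝ g) →
        (∀ w ∈ W, J w ∈ W) → W = ⊥) :
    ∀ x y : g, ⁅x, y⁆ = ⁅J x, J y⁆ := by
  have hJJ : ∀ x : g, J (J x) = -x := fun x => by
    have := LinearMap.congr_fun hJ x
    simpa using this
  have hbr : ∀ x y : g, ⁅x, y⁆ ∈ (LieAlgebra.derivedSeries ℝ g 1 : Submodule ℝ g) := by
    intro x y
    have : ⁅x, y⁆ ∈ (LieAlgebra.derivedSeries ℝ g 1 : LieIdeal ℝ g) := by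
      rw [LieAlgebra.derivedSeries_def, LieAlgebra.derivedSeriesOfIdeal_succ,
        LieAlgebra.derivedSeriesOfIdeal_zero]
      exact LieSubmodule.lie_mem_lie (LieSubmodule.mem_top x) (LieSubmodule.mem_top y)
    exact this
  set S : Set g := {v | ∃ x y : g, v = ⁅x, y⁆ - ⁅J x, J y⁆} with hS
  set W : Submodule ℝ g := Submodule.span ℝ S with hWdef
  have hWd : W ≤ (LieAlgebra.derivedSeries ℝ g 1 : Submodule ℝ g) := by
    rw [hWdef, Submodule.span_le]
    rintro v ⟨x, y, rfl⟩
    exact Submodule.sub_mem _ (hbr x y) (hbr (J x) (J y))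
  have key : ∀ x y : g, J (⁅x, y⁆ - ⁅J x, J y⁆) = ⁅J x, y⁆ - ⁅J (J x), J y⁆ := by
    intro x y
    have e1 : ⁅x, y⁆ - ⁅J x, J y⁆ = -(J ⁅J x, y⁆ + J ⁅x, J y⁆) := by
      rw [eq_neg_iff_add_eq_zero, ← hint x y]; abel
    rw [e1, map_neg, map_add, hJJ, hJJ, hJJ]
    rw [neg_lie]
    abel
  have hWJ : ∀ w ∈ W, J w ∈ W := by
    intro w hw
    induction hw using Submodule.span_induction with
    | mem v hv =>
      obtain ⟨x, y, rfl⟩ := hv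
      rw [key x y]
      exact Submodule.subset_span ⟨J x, y, rfl⟩
    | zero => simp
    | add u v _ _ hu hv => rw [map_add]; exact W.add_mem hu hv
    | smul a v _ hv => rw [map_smul]; exact W.smul_mem a hv
  have hW0 : W = ⊥ := h W hWd hWJ
  intro x y
  have hm : ⁅x, y⁆ - ⁅J x, J y⁆ ∈ W := Submodule.subset_span ⟨x, y, rfl⟩
  rw [hW0, Submodule.mem_bot, sub_eq_zero] at hm
  exact hm
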